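/- Fix an integer m₁ ≥ 2 and integers x_1,…,x_{m₁} ≥ 1. For each h > 0 let Π_h be drawn from the Beta(cπ(h), c(1−π(h))) distribution and, conditionally on Π_h, let Δ_1^h,…,Δ_{m₁}^h be independent with Δ_i^h ~ Binomial(x_i, Π_h). Then for all i ≠ j, lim_{h→0+} h⁻¹·Cov(Δ_i^h, Δ_j^h) = x_i·x_j·r(t)/(c+1), which is strictly positive. -/

import Mathlib

open scoped BigOperators
open Filter Topology Asymptotics

/-- The Beta function `B(a,b) = Γ(a)Γ(b)/Γ(a+b)`. -/
noncomputable def betaFn (a b : ℝ) : ℝ := Real.Gamma a * Real.Gamma b / Real.Gamma (a + b)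

/-- The joint pmf of `(Δ_1,…,Δ_m)` where, conditionally on `Π ~ Beta(α,β)`, the `Δ_i` are
independent with `Δ_i ~ Binomial(x_i, Π)`:
`P(Δ = k) = (∏ C(x_i,k_i)) · B(∑k+α, ∑x−∑k+β)/B(α,β)`. -/
noncomputable def mbbPmf (m : ℕ) (x : Fin m → ℕ) (α β : ℝ) (k : Fin m → ℕ) : ℝ :=
  (∏ i, ((x i).choose (k i) : ℝ)) *
    betaFn ((∑ i, (k i : ℝ)) + α) ((∑ i, (x i : ℝ)) - (∑ i, (k i : ℝ)) + β) / betaFn α β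

/-- Expectation of `f(Δ_1,…,Δ_m)` under the above joint distribution. -/
noncomputable def mbbExp (m : ℕ) (x : Fin m → ℕ) (α β : ℝ) (f : (Fin m → ℕ) → ℝ) : ℝ :=
  ∑ k ∈ Fintype.piFinset (fun i => Finset.range (x i + 1)), f k * mbbPmf m x α β k

/-- `π(h) = 1 − exp(−∫_t^{t+h} r(s) ds)`. -/
noncomputable def pih (r : ℝ → ℝ) (t h : ℝ) : ℝ :=
  1 - Real.exp (-(∫ s in t..(t + h), r s))


open MeasureTheory

lemma betaFn_pos {a b : ℝ} (ha : 0 < a) (hb : 0 < b) : 0 < betaFn a b :=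
  div_pos (mul_pos (Real.Gamma_pos_of_pos ha) (Real.Gamma_pos_of_pos hb))
    (Real.Gamma_pos_of_pos (by linarith))

lemma betaFn_succ {a b : ℝ} (ha : 0 < a) (hb : 0 < b) :
    betaFn (a + 1) b = a / (a + b) * betaFn a b := by
  have h1 : Real.Gamma (a + 1) = a * Real.Gamma a := Real.Gamma_add_one ha.ne'
  have h2 : Real.Gamma (a + 1 + b) = (a + b) * Real.Gamma (a + b) := by
    rw [show a + 1 + b = (a + b) + 1 by ring, Real.Gamma_add_one (by positivity)]
  have h3 : Real.Gamma (a + b) ≠ 0 := (Real.Gamma_pos_of_pos (by linarith)).ne'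
  have h4 : (0:ℝ) < a + b := by linarith
  rw [betaFn, betaFn, h1, h2]
  field_simp

lemma complex_eq_ofReal {a b : ℝ} (p : ℝ) (hp : p ∈ Set.Ioc (0:ℝ) 1) :
    (p : ℂ) ^ ((a:ℂ) - 1) * (1 - (p : ℂ)) ^ ((b:ℂ) - 1)
      = ((p ^ (a - 1) * (1 - p) ^ (b - 1) : ℝ) : ℂ) := by
  have h1 : ((p ^ (a-1) : ℝ) : ℂ) = (p : ℂ) ^ ((a:ℂ) - 1) := by
    rw [Complex.ofReal_cpow hp.1.le]; push_cast; ring_nf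
  have h2 : (((1 - p) ^ (b-1) : ℝ) : ℂ) = (1 - (p : ℂ)) ^ ((b:ℂ) - 1) := by
    rw [Complex.ofReal_cpow (by linarith [hp.2])]; push_cast; ring_nf
  rw [Complex.ofReal_mul, h1, h2]

lemma realBeta_integrable {a b : ℝ} (ha : 0 < a) (hb : 0 < b) :
    IntervalIntegrable (fun p : ℝ => p ^ (a - 1) * (1 - p) ^ (b - 1)) volume 0 1 := by
  have hc := Complex.betaIntegral_convergent (u := (a : ℂ)) (v := (b : ℂ)) (by simpa) (by simpa)
  have hre : IntervalIntegrable
      (fun p : ℝ => ((p : ℂ) ^ ((a:ℂ) - 1) * (1 - (p : ℂ)) ^ ((b:ℂ) - 1)).re) volume 0 1 := by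
    refine hc.mono_fun ?_ ?_
    · exact Complex.continuous_re.comp_aestronglyMeasurable hc.def'.aestronglyMeasurable
    · filter_upwards with p
      exact Complex.abs_re_le_norm _
  refine hre.congr ?_
  intro p hp
  rw [Set.uIoc_of_le (by norm_num : (0:ℝ) ≤ 1)] at hp
  show ((p : ℂ) ^ ((a:ℂ) - 1) * (1 - (p : ℂ)) ^ ((b:ℂ) - 1)).re = p ^ (a - 1) * (1 - p) ^ (b - 1)
  rw [complex_eq_ofReal p hp, Complex.ofReal_re]

lemma realBeta_eq {a b : ℝ} (ha : 0 < a) (hb : 0 < b) :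
    ∫ p in (0:ℝ)..1, p ^ (a - 1) * (1 - p) ^ (b - 1) = betaFn a b := by
  have key := Complex.Gamma_mul_Gamma_eq_betaIntegral
    (s := (a : ℂ)) (t := (b : ℂ)) (by simpa) (by simpa)
  have hne : Complex.Gamma ((a:ℂ) + b) ≠ 0 := by
    rw [show ((a:ℂ) + b) = ((a + b : ℝ) : ℂ) by push_cast; ring, Complex.Gamma_ofReal]
    exact_mod_cast (Real.Gamma_pos_of_pos (by linarith)).ne'
  have hbi : ((∫ p in (0:ℝ)..1, p ^ (a - 1) * (1 - p) ^ (b - 1) : ℝ) : ℂ)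
      = Complex.betaIntegral a b := by
    rw [Complex.betaIntegral, ← intervalIntegral.integral_ofReal]
    refine intervalIntegral.integral_congr_ae ?_
    filter_upwards with p hp
    rw [Set.uIoc_of_le (by norm_num : (0:ℝ) ≤ 1)] at hp
    exact (complex_eq_ofReal p hp).symm
  have hval : Complex.betaIntegral a b = ((betaFn a b : ℝ) : ℂ) := by
    have : Complex.betaIntegral a b = Complex.Gamma a * Complex.Gamma b / Complex.Gamma ((a:ℂ)+b) := by
      rw [eq_div_iff hne]
      linear_combination -key
    rw [this, betaFn]
    push_cast
    rw [← Complex.Gamma_ofReal, ← Complex.Gamma_ofReal, ← Complex.Gamma_ofReal]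
    push_cast
    ring
  rw [hval] at hbi
  exact_mod_cast hbi

lemma binom_sum_one (n : ℕ) (p : ℝ) :
    ∑ k ∈ Finset.range (n + 1), ((n.choose k : ℝ)) * p ^ k * (1 - p) ^ (n - k) = 1 := by
  have := add_pow p (1 - p) n
  simp only [add_sub_cancel, one_pow] at this
  calc ∑ k ∈ Finset.range (n + 1), ((n.choose k : ℝ)) * p ^ k * (1 - p) ^ (n - k)
      = ∑ k ∈ Finset.range (n + 1), p ^ k * (1 - p) ^ (n - k) * ((n.choose k : ℝ)) :=
        Finset.sum_congr rfl fun k _ => by ring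
    _ = 1 := this.symm

lemma binom_sum_mean (n : ℕ) (p : ℝ) :
    ∑ k ∈ Finset.range (n + 1), (k : ℝ) * (n.choose k : ℝ) * p ^ k * (1 - p) ^ (n - k)
      = n * p := by
  cases n with
  | zero => simp
  | succ m =>
    rw [Finset.sum_range_succ']
    simp only [Nat.cast_zero, zero_mul, add_zero]
    have hid : ∀ k : ℕ, ((k+1 : ℕ) : ℝ) * ((m+1).choose (k+1) : ℝ) = (m+1 : ℝ) * (m.choose k : ℝ) := by
      intro k
      have := Nat.add_one_mul_choose_eq m k
      have h2 : (k+1) * ((m+1).choose (k+1)) = (m+1) * m.choose k := by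
        rw [mul_comm]; exact (Nat.add_one_mul_choose_eq m k).symm
      exact_mod_cast congrArg (fun z : ℕ => (z : ℝ)) h2
    have : ∀ k ∈ Finset.range (m + 1),
        ((k+1 : ℕ) : ℝ) * ((m+1).choose (k+1) : ℝ) * p ^ (k+1) * (1 - p) ^ (m + 1 - (k+1))
        = ((m:ℝ)+1) * p * ((m.choose k : ℝ) * p ^ k * (1 - p) ^ (m - k)) := by
      intro k _
      rw [show ((k+1:ℕ):ℝ) * ((m+1).choose (k+1) : ℝ) = ((m+1:ℕ):ℝ) * (m.choose k : ℝ) by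
        exact_mod_cast hid k, Nat.succ_sub_succ]
      push_cast
      ring
    rw [Finset.sum_congr rfl this, ← Finset.mul_sum, binom_sum_one m p, mul_one]
    push_cast
    ring

lemma mbbExp_prod (m : ℕ) (x : Fin m → ℕ) {α β : ℝ} (hα : 0 < α) (hβ : 0 < β)
    (g : Fin m → ℕ → ℝ) :
    mbbExp m x α β (fun k => ∏ l, g l (k l)) * betaFn α β =
      ∫ p in (0:ℝ)..1,
        (∏ l, ∑ k ∈ Finset.range (x l + 1),
          g l k * ((x l).choose k : ℝ) * p ^ k * (1 - p) ^ (x l - k)) *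
        (p ^ (α - 1) * (1 - p) ^ (β - 1)) := by
  have hB : betaFn α β ≠ 0 := (betaFn_pos hα hβ).ne'
  set P := Fintype.piFinset (fun i : Fin m => Finset.range (x i + 1)) with hP
  have hmem : ∀ k ∈ P, ∀ l, k l ≤ x l := by
    intro k hk l
    have := Finset.mem_range.mp ((Fintype.mem_piFinset.mp hk) l)
    omega
  -- positivity of shifted parameters
  have hpos1 : ∀ k : Fin m → ℕ, 0 < (∑ l, (k l : ℝ)) + α := fun k => by positivity
  have hpos2 : ∀ k ∈ P, 0 < (∑ l, (x l : ℝ)) - (∑ l, (k l : ℝ)) + β := by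
    intro k hk
    have : (∑ l, (k l : ℝ)) ≤ ∑ l, (x l : ℝ) :=
      Finset.sum_le_sum fun l _ => by exact_mod_cast hmem k hk l
    linarith
  -- step A+B: rewrite as sum of integrals
  have stepA : mbbExp m x α β (fun k => ∏ l, g l (k l)) * betaFn α β =
      ∑ k ∈ P, ∫ p in (0:ℝ)..1,
        (∏ l, g l (k l)) * (∏ l, ((x l).choose (k l) : ℝ)) *
          (p ^ ((∑ l, (k l : ℝ)) + α - 1) *
            (1 - p) ^ ((∑ l, (x l : ℝ)) - (∑ l, (k l : ℝ)) + β - 1)) := by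
    rw [mbbExp, Finset.sum_mul]
    refine Finset.sum_congr rfl fun k hk => ?_
    rw [mbbPmf, ← realBeta_eq (hpos1 k) (hpos2 k hk), intervalIntegral.integral_const_mul]
    field_simp
  rw [stepA, ← intervalIntegral.integral_finset_sum]
  · refine intervalIntegral.integral_congr_ae ?_
    have h1 : ∀ᵐ p : ℝ, p ≠ 1 := by
      rw [MeasureTheory.ae_iff]
      have : {a : ℝ | ¬ a ≠ 1} = {1} := by ext a; simp
      rw [this]
      exact MeasureTheory.measure_singleton 1
    filter_upwards [h1] with p hp1 hp
    rw [Set.uIoc_of_le (by norm_num : (0:ℝ) ≤ 1)] at hp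
    have hp0 : 0 < p := hp.1
    have hq0 : 0 < 1 - p := lt_of_le_of_ne (by linarith [hp.2]) (by intro h; exact hp1 (by linarith))
    rw [Finset.prod_univ_sum]
    rw [Finset.sum_mul]
    refine Finset.sum_congr rfl fun k hk => ?_
    have hsub : ∀ l, ((x l - k l : ℕ) : ℝ) = (x l : ℝ) - (k l : ℝ) := fun l =>
      Nat.cast_sub (hmem k hk l)
    have e1 : ∏ l, (g l (k l) * ((x l).choose (k l) : ℝ) * p ^ (k l) * (1 - p) ^ (x l - k l))
        = (∏ l, g l (k l)) * (∏ l, ((x l).choose (k l) : ℝ)) *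
          (p ^ (∑ l, k l) * (1 - p) ^ (∑ l, (x l - k l))) := by
      rw [Finset.prod_mul_distrib, Finset.prod_mul_distrib, Finset.prod_mul_distrib,
        Finset.prod_pow_eq_pow_sum, Finset.prod_pow_eq_pow_sum]
      ring
    rw [e1]
    have e2 : (p : ℝ) ^ (∑ l, k l) * p ^ (α - 1) = p ^ ((∑ l, (k l : ℝ)) + α - 1) := by
      rw [show (∑ l, (k l : ℝ)) + α - 1 = ((∑ l, k l : ℕ) : ℝ) + (α - 1) by push_cast; ring,
        Real.rpow_add hp0, Real.rpow_natCast]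
    have e3 : (1 - p) ^ (∑ l, (x l - k l)) * (1 - p) ^ (β - 1)
        = (1 - p) ^ ((∑ l, (x l : ℝ)) - (∑ l, (k l : ℝ)) + β - 1) := by
      rw [show (∑ l, (x l : ℝ)) - (∑ l, (k l : ℝ)) + β - 1
          = ((∑ l, (x l - k l) : ℕ) : ℝ) + (β - 1) by
            push_cast [hsub]
            rw [Finset.sum_sub_distrib]
            ring,
        Real.rpow_add hq0, Real.rpow_natCast]
    rw [← e2, ← e3]
    ring
  · intro k hk
    exact ((realBeta_integrable (hpos1 k) (hpos2 k hk)).const_mul _)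

lemma moment_integral {α β : ℝ} (hα : 0 < α) (hβ : 0 < β) (s : ℕ) :
    ∫ p in (0:ℝ)..1, p ^ s * (p ^ (α - 1) * (1 - p) ^ (β - 1)) = betaFn (α + s) β := by
  rw [← realBeta_eq (by positivity) hβ]
  refine intervalIntegral.integral_congr_ae ?_
  filter_upwards with p hp
  rw [Set.uIoc_of_le (by norm_num : (0:ℝ) ≤ 1)] at hp
  rw [show α + (s:ℝ) - 1 = (s:ℝ) + (α - 1) by ring, Real.rpow_add hp.1, Real.rpow_natCast]
  ring

lemma mbbExp_coord (m : ℕ) (x : Fin m → ℕ) {α β : ℝ} (hα : 0 < α) (hβ : 0 < β) (i : Fin m) :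
    mbbExp m x α β (fun k => (k i : ℝ)) = (x i : ℝ) * (α / (α + β)) := by
  have hB := (betaFn_pos hα hβ).ne'
  have key := mbbExp_prod m x hα hβ (fun l k => if l = i then (k:ℝ) else 1)
  have hf : (fun k : Fin m → ℕ => ∏ l, (if l = i then ((k l):ℝ) else 1))
      = fun k => ((k i):ℝ) := by
    funext k
    simp [Finset.prod_ite_eq' Finset.univ i (fun l => ((k l):ℝ))]
  rw [hf] at key
  have hint : ∀ p : ℝ, (∏ l, ∑ k ∈ Finset.range (x l + 1),
      (if l = i then (k:ℝ) else 1) * ((x l).choose k : ℝ) * p ^ k * (1 - p) ^ (x l - k))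
      = (x i : ℝ) * p ^ (1:ℕ) := by
    intro p
    have hS : ∀ l : Fin m, (∑ k ∈ Finset.range (x l + 1),
        (if l = i then (k:ℝ) else 1) * ((x l).choose k : ℝ) * p ^ k * (1 - p) ^ (x l - k))
        = if l = i then (x l:ℝ) * p else 1 := by
      intro l
      by_cases h : l = i
      · simp only [if_pos h]; exact binom_sum_mean (x l) p
      · simp only [if_neg h, one_mul]; exact binom_sum_one (x l) p
    rw [Finset.prod_congr rfl (fun l _ => hS l),
      Finset.prod_ite_eq' Finset.univ i (fun l => ((x l):ℝ) * p)]
    simp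
  simp_rw [hint, mul_assoc, intervalIntegral.integral_const_mul, moment_integral hα hβ 1] at key
  rw [show α + ((1:ℕ):ℝ) = α + 1 by push_cast; ring, betaFn_succ hα hβ] at key
  rw [eq_div_of_mul_eq hB key]
  field_simp

lemma mbbExp_coord2 (m : ℕ) (x : Fin m → ℕ) {α β : ℝ} (hα : 0 < α) (hβ : 0 < β)
    {i j : Fin m} (hij : i ≠ j) :
    mbbExp m x α β (fun k => (k i : ℝ) * (k j : ℝ))
      = (x i : ℝ) * (x j : ℝ) * (α / (α + β)) * ((α + 1) / (α + β + 1)) := by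
  classical
  have hB := (betaFn_pos hα hβ).ne'
  set g : Fin m → ℕ → ℝ := fun l k => if l = i then (k:ℝ) else if l = j then (k:ℝ) else 1 with hg
  have prod_eval : ∀ (A : Fin m → ℝ),
      (∏ l, (if l = i then A l else if l = j then A l else 1)) = A i * A j := by
    intro A
    have h1 : ∏ l ∈ ({i, j} : Finset (Fin m)),
        (if l = i then A l else if l = j then A l else 1)
        = ∏ l, (if l = i then A l else if l = j then A l else 1) := by
      refine Finset.prod_subset (Finset.subset_univ _) ?_
      intro l _ hl
      simp only [Finset.mem_insert, Finset.mem_singleton, not_or] at hl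
      simp [hl.1, hl.2]
    rw [← h1, Finset.prod_pair hij]
    simp [hij, (Ne.symm hij)]
  have key := mbbExp_prod m x hα hβ g
  have hf : (fun k : Fin m → ℕ => ∏ l, g l (k l)) = fun k => ((k i):ℝ) * ((k j):ℝ) := by
    funext k
    exact prod_eval (fun l => ((k l):ℝ))
  rw [hf] at key
  have hint : ∀ p : ℝ, (∏ l, ∑ k ∈ Finset.range (x l + 1),
      g l k * ((x l).choose k : ℝ) * p ^ k * (1 - p) ^ (x l - k))
      = ((x i : ℝ) * (x j : ℝ)) * p ^ (2:ℕ) := by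
    intro p
    have hS : ∀ l : Fin m, (∑ k ∈ Finset.range (x l + 1),
        g l k * ((x l).choose k : ℝ) * p ^ k * (1 - p) ^ (x l - k))
        = if l = i then (x l:ℝ) * p else if l = j then (x l:ℝ) * p else 1 := by
      intro l
      by_cases h : l = i
      · simp only [hg, if_pos h]; exact binom_sum_mean (x l) p
      · by_cases h' : l = j
        · simp only [hg, if_neg h, if_pos h']; exact binom_sum_mean (x l) p
        · simp only [hg, if_neg h, if_neg h', one_mul]; exact binom_sum_one (x l) p
    rw [Finset.prod_congr rfl (fun l _ => hS l), prod_eval (fun l => ((x l):ℝ) * p)]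
    ring
  simp_rw [hint, mul_assoc, intervalIntegral.integral_const_mul, moment_integral hα hβ 2] at key
  rw [show α + ((2:ℕ):ℝ) = (α + 1) + 1 by push_cast; ring, betaFn_succ (by linarith) hβ,
    betaFn_succ hα hβ] at key
  rw [eq_div_of_mul_eq hB key]
  have h2 : α + 1 + β ≠ 0 := by positivity
  have h3 : α + β ≠ 0 := by positivity
  have h4 : α + β + 1 ≠ 0 := by positivity
  field_simp
  ring

lemma pih_zero (r : ℝ → ℝ) (t : ℝ) : pih r t 0 = 0 := by
  simp [pih]

lemma pih_mem {r : ℝ → ℝ} (hr_cont : Continuous r) (hr_pos : ∀ s, 0 < r s) (t : ℝ)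
    {h : ℝ} (hh : 0 < h) : 0 < pih r t h ∧ pih r t h < 1 := by
  have hI : 0 < ∫ s in t..(t + h), r s :=
    intervalIntegral.intervalIntegral_pos_of_pos (hr_cont.intervalIntegrable _ _)
      hr_pos (by linarith)
  constructor
  · have : Real.exp (-(∫ s in t..(t + h), r s)) < 1 := by
      rw [Real.exp_lt_one_iff]
      linarith
    simp only [pih]; linarith
  · have : 0 < Real.exp (-(∫ s in t..(t + h), r s)) := Real.exp_pos _
    simp only [pih]; linarith

lemma pih_hasDerivAt {r : ℝ → ℝ} (hr_cont : Continuous r) (t : ℝ) :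
    HasDerivAt (fun h => pih r t h) (r t) 0 := by
  have hG : HasDerivAt (fun v => ∫ s in t..v, r s) (r t) t :=
    intervalIntegral.integral_hasDerivAt_right (hr_cont.intervalIntegrable t t)
      (hr_cont.stronglyMeasurableAtFilter volume (𝓝 t)) hr_cont.continuousAt
  have h1 : HasDerivAt (fun h : ℝ => ∫ s in t..(t + h), r s) (r t) 0 := by
    have hin : HasDerivAt (fun h : ℝ => t + h) 1 0 := (hasDerivAt_id (0:ℝ)).const_add t
    have := HasDerivAt.comp (0:ℝ) (by simpa using hG) hin
    simpa [Function.comp_def] using this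
  have hI0 : (∫ s in t..(t + 0), r s) = 0 := by simp
  have h2 : HasDerivAt (fun h : ℝ => Real.exp (-(∫ s in t..(t + h), r s)))
      (Real.exp 0 * (-(r t))) 0 := by
    have := HasDerivAt.comp (0:ℝ) (Real.hasDerivAt_exp (-(∫ s in t..(t + 0), r s))) h1.neg
    simpa [hI0, Function.comp_def] using this
  have h3 := (hasDerivAt_const (0:ℝ) (1:ℝ)).sub h2
  simp only [Real.exp_zero, one_mul, mul_neg, sub_neg_eq_add, zero_sub, neg_neg] at h3
  simpa [pih, Pi.sub_def] using h3

lemma pih_slope_tendsto {r : ℝ → ℝ} (hr_cont : Continuous r) (t : ℝ) :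
    Filter.Tendsto (fun h => pih r t h / h) (nhdsWithin 0 (Set.Ioi 0)) (nhds (r t)) := by
  have := (pih_hasDerivAt hr_cont t).tendsto_slope_zero
  have h2 : Filter.Tendsto (fun h : ℝ => h⁻¹ • (pih r t (0 + h) - pih r t 0))
      (nhdsWithin 0 (Set.Ioi 0)) (nhds (r t)) :=
    this.mono_left (nhdsWithin_mono 0 (fun y hy => ne_of_gt hy))
  refine h2.congr fun h => ?_
  simp [pih_zero, smul_eq_mul, div_eq_inv_mul]

/-- with `Π_h ~ Beta(cπ(h), c(1−π(h)))` and, conditionally on `Π_h`,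
independent `Δ_i^h ~ Binomial(x_i, Π_h)` for `i = 1,…,m₁`, for all `i ≠ j`:
`lim_{h→0+} h⁻¹ Cov(Δ_i^h, Δ_j^h) = x_i x_j r(t)/(c+1) > 0`. -/
theorem mbb_infinitesimal_covariance
    (r : ℝ → ℝ) (hr_cont : Continuous r) (hr_pos : ∀ s, 0 < r s)
    (t c : ℝ) (hc : 0 < c) (m₁ : ℕ) (hm : 2 ≤ m₁)
    (x : Fin m₁ → ℕ) (hx : ∀ i, 1 ≤ x i) (i j : Fin m₁) (hij : i ≠ j) :
    Tendsto (fun h : ℝ => h⁻¹ *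
        (mbbExp m₁ x (c * pih r t h) (c * (1 - pih r t h))
            (fun k => (k i : ℝ) * (k j : ℝ))
          - mbbExp m₁ x (c * pih r t h) (c * (1 - pih r t h)) (fun k => (k i : ℝ))
            * mbbExp m₁ x (c * pih r t h) (c * (1 - pih r t h)) (fun k => (k j : ℝ))))
      (𝓝[>] (0 : ℝ)) (𝓝 ((x i : ℝ) * (x j : ℝ) * r t / (c + 1))) ∧
    0 < (x i : ℝ) * (x j : ℝ) * r t / (c + 1) := by
  have hxi : (0:ℝ) < (x i : ℝ) := by exact_mod_cast Nat.lt_of_lt_of_le Nat.zero_lt_one (hx i)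
  have hxj : (0:ℝ) < (x j : ℝ) := by exact_mod_cast Nat.lt_of_lt_of_le Nat.zero_lt_one (hx j)
  have hc1 : (0:ℝ) < c + 1 := by linarith
  have hpos : 0 < (x i : ℝ) * (x j : ℝ) * r t / (c + 1) :=
    div_pos (mul_pos (mul_pos hxi hxj) (hr_pos t)) hc1
  refine ⟨?_, hpos⟩
  have hslope := pih_slope_tendsto hr_cont t
  have hcont : Tendsto (fun h => pih r t h) (𝓝[>] (0:ℝ)) (𝓝 0) := by
    have := ((pih_hasDerivAt hr_cont t).continuousAt.continuousWithinAt
      (s := Set.Ioi (0:ℝ))).tendsto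
    simpa [pih_zero] using this
  have hmain : Tendsto (fun h : ℝ =>
      ((x i : ℝ) * (x j : ℝ) / (c + 1)) * (pih r t h / h) * (1 - pih r t h))
      (𝓝[>] (0:ℝ)) (𝓝 (((x i : ℝ) * (x j : ℝ) / (c + 1)) * r t * (1 - 0))) :=
    (tendsto_const_nhds.mul hslope).mul (tendsto_const_nhds.sub hcont)
  have hval : ((x i : ℝ) * (x j : ℝ) / (c + 1)) * r t * (1 - 0)
      = (x i : ℝ) * (x j : ℝ) * r t / (c + 1) := by ring
  rw [hval] at hmain
  refine hmain.congr' ?_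
  filter_upwards [self_mem_nhdsWithin] with h hh
  have hh0 : (0:ℝ) < h := hh
  obtain ⟨hπ0, hπ1⟩ := pih_mem hr_cont hr_pos t hh0
  set π := pih r t h with hπ
  have hα : 0 < c * π := mul_pos hc hπ0
  have hβ : 0 < c * (1 - π) := mul_pos hc (by linarith)
  have hsum : c * π + c * (1 - π) = c := by ring
  have E1 : mbbExp m₁ x (c*π) (c*(1-π)) (fun k => (k i : ℝ)) = (x i : ℝ) * π := by
    rw [mbbExp_coord m₁ x hα hβ i, hsum]
    field_simp
  have E2 : mbbExp m₁ x (c*π) (c*(1-π)) (fun k => (k j : ℝ)) = (x j : ℝ) * π := by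
    rw [mbbExp_coord m₁ x hα hβ j, hsum]
    field_simp
  have E3 : mbbExp m₁ x (c*π) (c*(1-π)) (fun k => (k i : ℝ) * (k j : ℝ))
      = (x i : ℝ) * (x j : ℝ) * π * ((c * π + 1) / (c + 1)) := by
    rw [mbbExp_coord2 m₁ x hα hβ hij, hsum]
    field_simp
  rw [E1, E2, E3]
  field_simp
  ring
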